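/- If T is sub-n-normal and S is its minimal n-normal extension, and T is invertible, then S is invertible. -/

import Mathlib

open ContinuousLinearMap

section

variable {H K : Type*} [NormedAddCommGroup H] [InnerProductSpace ℂ H] [CompleteSpace H]
  [NormedAddCommGroup K] [InnerProductSpace ℂ K] [CompleteSpace K]

/-- `S ∈ B(K)` is an n-normal extension of `T ∈ B(H)` along the isometric embedding
`V : H → K` if `Sⁿ` is normal, `S` leaves (the image of) `H` invariant and `S|_H = T`. -/
def IsNNormalExt (n : ℕ) (V : H →ₗᵢ[ℂ] K) (S : K →L[ℂ] K) (T : H →L[ℂ] H) : Prop :=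
  IsStarNormal (S ^ n) ∧ ∀ x : H, S (V x) = V (T x)

/-- `S` is a *minimal* n-normal extension of `T` if no proper closed subspace of `K`
containing `H` and invariant under `S` yields, by restriction, an n-normal extension of `T`. -/
def IsMinimalNNormalExt (n : ℕ) (V : H →ₗᵢ[ℂ] K) (S : K →L[ℂ] K) (T : H →L[ℂ] H) : Prop :=
  IsNNormalExt n V S T ∧
  ∀ (M : Submodule ℂ K) (hM : IsClosed (M : Set K)) (hinv : ∀ y ∈ M, S y ∈ M)
    (_ : ∀ x : H, V x ∈ M),
    (letI : CompleteSpace M := hM.completeSpace_coe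
     IsStarNormal ((ContinuousLinearMap.codRestrict (S.comp M.subtypeL) M
        (fun y => hinv y y.2)) ^ n)) →
    M = ⊤

/-- The approximate point spectrum. -/
def approxPointSpectrum {E : Type*} [NormedAddCommGroup E] [NormedSpace ℂ E]
    (T : E →L[ℂ] E) : Set ℂ :=
  {lam : ℂ | ∃ g : ℕ → E, (∀ m, ‖g m‖ = 1) ∧
    Filter.Tendsto (fun m => ‖T (g m) - lam • g m‖) Filter.atTop (nhds 0)}

/-- If `T` is sub-n-normal with minimal n-normal extension `S`, and `T` is invertible, then
`S` is invertible. -/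
theorem minimal_extension_invertible
    (n : ℕ) (T : H →L[ℂ] H) (V : H →ₗᵢ[ℂ] K) (S : K →L[ℂ] K)
    (hmin : IsMinimalNNormalExt n V S T) (hT : IsUnit T) :
    IsUnit S := by
  obtain ⟨⟨hN, hext⟩, hmin2⟩ := hmin
  -- the inverse of T
  set tu := hT.unit with htu
  have htuv : (tu : H →L[ℂ] H) = T := hT.unit_spec
  set Ti : H →L[ℂ] H := ((tu⁻¹ : (H →L[ℂ] H)ˣ) : H →L[ℂ] H) with hTi
  have hTTi : ∀ (m : ℕ) (x : H), (T ^ m) ((Ti ^ m) x) = x := by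
    intro m x
    have h : (T ^ m) * (Ti ^ m) = 1 := by
      rw [hTi, ← htuv, ← Units.val_pow_eq_pow_val, ← Units.val_pow_eq_pow_val, inv_pow,
        ← Units.val_mul, mul_inv_cancel, Units.val_one]
    calc (T ^ m) ((Ti ^ m) x) = ((T ^ m) * (Ti ^ m)) x := rfl
      _ = x := by rw [h]; rfl
  -- extension property for powers
  have hextpow : ∀ (k : ℕ) (x : H), (S ^ k) (V x) = V ((T ^ k) x) := by
    intro k
    induction k with
    | zero => intro x; simp
    | succ k ih =>
      intro x
      have h1 : (S ^ (k+1)) (V x) = S ((S ^ k) (V x)) := by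
        rw [pow_succ']; rfl
      rw [h1, ih, hext, ← ContinuousLinearMap.mul_apply, ← pow_succ']
  rcases Nat.eq_zero_or_pos n with hn0 | hn
  · -- case n = 0 : V(H) itself is admissible, so V is surjective and S ≅ T.
    subst hn0
    have hVcont : Isometry V := V.isometry
    set M : Submodule ℂ K := LinearMap.range V.toLinearMap with hM
    have hmem : ∀ y : K, y ∈ M ↔ ∃ x : H, V x = y := by
      intro y; constructor
      · rintro ⟨x, rfl⟩; exact ⟨x, rfl⟩
      · rintro ⟨x, rfl⟩; exact ⟨x, rfl⟩
    have hMclosed : IsClosed (M : Set K) := by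
      have h : (M : Set K) = Set.range V := by
        ext y
        simp only [SetLike.mem_coe, hmem y, Set.mem_range]
      rw [h]
      exact hVcont.isClosedEmbedding.isClosed_range
    have hinv : ∀ y ∈ M, S y ∈ M := by
      intro y hy
      obtain ⟨x, rfl⟩ := (hmem y).mp hy
      exact (hmem _).mpr ⟨T x, (hext x).symm⟩
    have hVM : ∀ x : H, V x ∈ M := fun x => (hmem _).mpr ⟨x, rfl⟩
    have hMtop : M = ⊤ := by
      refine hmin2 M hMclosed hinv hVM ?_
      letI : CompleteSpace M := hMclosed.completeSpace_coe
      show IsStarNormal ((ContinuousLinearMap.codRestrict (S.comp M.subtypeL) M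
        (fun y => hinv y y.2)) ^ 0)
      rw [pow_zero]
      letI : CompleteSpace M := hMclosed.completeSpace_coe
      exact @IsStarNormal.one (M →L[ℂ] M) _ _
    have hsurj : Function.Surjective V := by
      intro y
      have hy : y ∈ M := hMtop ▸ Submodule.mem_top
      exact (hmem y).mp hy
    set e : H ≃ₗᵢ[ℂ] K := LinearIsometryEquiv.ofSurjective V hsurj with he
    have heV : ∀ x : H, e x = V x := fun x => rfl
    have heVsymm : ∀ x : H, e.symm (V x) = x := by
      intro x; rw [← heV]; exact e.symm_apply_apply x
    set W : K →L[ℂ] K :=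
      ((e.toContinuousLinearEquiv : H →L[ℂ] K).comp Ti).comp
        (e.symm.toContinuousLinearEquiv : K →L[ℂ] H) with hW
    have hWapp : ∀ y : K, W y = V (Ti (e.symm y)) := fun y => rfl
    have hSW : S * W = 1 := by
      ext y
      have h2 : S (W y) = V (T (Ti (e.symm y))) := by rw [hWapp, hext]
      have h3 : T (Ti (e.symm y)) = e.symm y := by
        have h := hTTi 1 (e.symm y); simpa [pow_one] using h
      have h4 : V (e.symm y) = y := by
        rw [← heV]; exact e.apply_symm_apply y
      simp only [ContinuousLinearMap.mul_apply, ContinuousLinearMap.one_apply]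
      rw [h2, h3, h4]
    have hWS : W * S = 1 := by
      ext y
      obtain ⟨x, rfl⟩ := hsurj y
      have h1 : S (V x) = V (T x) := hext x
      simp only [ContinuousLinearMap.mul_apply, ContinuousLinearMap.one_apply]
      rw [h1, hWapp, heVsymm]
      have h3 : Ti (T x) = x := by
        have h : (Ti * T) x = x := by
          rw [hTi, ← htuv, ← Units.val_mul, inv_mul_cancel, Units.val_one]; rfl
        simpa using h
      rw [h3]
    exact isUnit_iff_exists.mpr ⟨W, hSW, hWS⟩
  · -- main case n ≥ 1
    by_contra hS
    set N : K →L[ℂ] K := S ^ n with hNdef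
    have hNnormal : IsStarNormal N := hN
    have hNu : ¬ IsUnit N := fun h => hS ((isUnit_pow_iff hn.ne').mp h)
    have h0 : (0 : ℂ) ∈ spectrum ℂ N := by rw [spectrum.zero_mem_iff]; exact hNu
    -- constants
    set C : ℝ := ‖Ti‖ with hC
    have hC0 : 0 ≤ C := norm_nonneg _
    set c : ℝ := C ^ n with hc
    have hc0 : 0 ≤ c := pow_nonneg hC0 n
    set δ : ℝ := 1 / (2 * (c + 1)) with hδ
    have hδpos : 0 < δ := by positivity
    have hr1 : δ * c < 1 := by
      rw [hδ, div_mul_eq_mul_div, one_mul, div_lt_one (by positivity)]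
      nlinarith
    have hr0 : 0 ≤ δ * c := mul_nonneg hδpos.le hc0
    have hTim : ∀ m : ℕ, ‖Ti ^ m‖ ≤ C ^ m := by
      intro m
      induction m with
      | zero =>
        rw [pow_zero, pow_zero]
        show ‖(1 : H →L[ℂ] H)‖ ≤ 1
        rw [ContinuousLinearMap.one_def]
        exact ContinuousLinearMap.norm_id_le
      | succ m ih =>
        calc ‖Ti ^ (m+1)‖ = ‖Ti ^ m * Ti‖ := by rw [pow_succ]
          _ ≤ ‖Ti ^ m‖ * ‖Ti‖ := norm_mul_le _ _
          _ ≤ C ^ m * C := by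
              apply mul_le_mul ih le_rfl (norm_nonneg _) (pow_nonneg hC0 m)
          _ = C ^ (m+1) := by rw [pow_succ]
    -- the bump function
    set f : ℂ → ℂ := fun z => (((1 - ‖z‖ / δ) ⊔ 0 : ℝ) : ℂ) with hf
    have hfcont : Continuous f := by
      apply Complex.continuous_ofReal.comp
      exact ((continuous_const.sub (continuous_norm.div_const δ)).max continuous_const)
    have hf0 : f 0 = 1 := by simp [hf, hδpos.ne']
    have hfbd : ∀ z : ℂ, ‖f z‖ ≤ 1 := by
      intro z
      rw [hf]
      simp only [Complex.norm_real, Real.norm_eq_abs]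
      rw [abs_le]
      have h1 : 0 ≤ ‖z‖ / δ := div_nonneg (norm_nonneg z) hδpos.le
      constructor
      · have := le_max_right (1 - ‖z‖ / δ) 0; linarith
      · apply max_le _ zero_le_one; linarith
    have hfsupp : ∀ z : ℂ, δ ≤ ‖z‖ → f z = 0 := by
      intro z hz
      rw [hf]
      have h : 1 - ‖z‖ / δ ≤ 0 := by
        rw [sub_nonpos, le_div_iff₀ hδpos]; linarith
      simp only [max_eq_right h, Complex.ofReal_zero]
    set F : K →L[ℂ] K := cfc f N with hF
    -- norm bound for F * N ^ k
    have hFNk : ∀ k : ℕ, ‖F * N ^ k‖ ≤ δ ^ k := by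
      intro k
      have h1 : F * N ^ k = cfc (fun z : ℂ => f z * z ^ k) N := by
        rw [hF, ← cfc_pow_id (R := ℂ) N k,
          ← cfc_mul f (fun z : ℂ => z ^ k) N hfcont.continuousOn (by fun_prop)]
      rw [h1]
      apply norm_cfc_le (pow_nonneg hδpos.le k)
      intro x _
      rw [norm_mul, norm_pow]
      rcases le_or_gt ‖x‖ δ with hx | hx
      · calc ‖f x‖ * ‖x‖ ^ k ≤ 1 * δ ^ k :=
              mul_le_mul (hfbd x) (pow_le_pow_left₀ (norm_nonneg x) hx k)
                (pow_nonneg (norm_nonneg x) k) zero_le_one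
          _ = δ ^ k := one_mul _
      · rw [hfsupp x hx.le]
        simp [pow_nonneg hδpos.le k]
    -- the monoid of words in S and N*
    set Ws : Submonoid (K →L[ℂ] K) := Submonoid.closure {S, star N} with hWs
    have hScl : S ∈ Ws := Submonoid.subset_closure (by simp)
    have hstarNcl : star N ∈ Ws := Submonoid.subset_closure (by simp)
    have hWcomm : ∀ W ∈ Ws, Commute W N := by
      intro W hW
      induction hW using Submonoid.closure_induction with
      | mem x hx =>
        have hx' : x = S ∨ x = star N := hx
        rcases hx' with h | h
        · rw [h]; exact (Commute.refl S).pow_right n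
        · rw [h]; exact hNnormal.star_comm_self
      | one => exact Commute.one_left N
      | mul x y _ _ hx hy => exact hx.mul_left hy
    -- key vanishing lemma
    have hkey : ∀ W ∈ Ws, ∀ x : H, F (W (V x)) = 0 := by
      intro W hW x
      have hbound : ∀ k : ℕ, ‖F (W (V x))‖ ≤ (δ * c) ^ k * (‖W‖ * ‖x‖) := by
        intro k
        set y : H := (Ti ^ (n * k)) x with hy
        have h1 : (N ^ k) (V y) = V x := by
          rw [hNdef, ← pow_mul, hextpow (n * k) y, hy, hTTi]
        have h2 : F (W (V x)) = (F * N ^ k) (W (V y)) := by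
          have hcomm : W * N ^ k = N ^ k * W := ((hWcomm W hW).pow_right k).eq
          calc F (W (V x)) = F (W ((N ^ k) (V y))) := by rw [h1]
            _ = F ((W * N ^ k) (V y)) := rfl
            _ = F ((N ^ k * W) (V y)) := by rw [hcomm]
            _ = (F * N ^ k) (W (V y)) := rfl
        have h3 : ‖V y‖ ≤ c ^ k * ‖x‖ := by
          rw [V.norm_map, hy]
          calc ‖(Ti ^ (n*k)) x‖ ≤ ‖Ti ^ (n*k)‖ * ‖x‖ := (Ti ^ (n*k)).le_opNorm x
            _ ≤ C ^ (n*k) * ‖x‖ :=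
                mul_le_mul_of_nonneg_right (hTim (n*k)) (norm_nonneg x)
            _ = c ^ k * ‖x‖ := by rw [hc, ← pow_mul]
        calc ‖F (W (V x))‖ = ‖(F * N ^ k) (W (V y))‖ := by rw [h2]
          _ ≤ ‖F * N ^ k‖ * ‖W (V y)‖ := (F * N ^ k).le_opNorm _
          _ ≤ δ ^ k * (‖W‖ * (c ^ k * ‖x‖)) := by
              apply mul_le_mul (hFNk k) _ (norm_nonneg _) (pow_nonneg hδpos.le k)
              exact (W.le_opNorm _).trans
                (mul_le_mul_of_nonneg_left h3 (norm_nonneg W))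
          _ = (δ * c) ^ k * (‖W‖ * ‖x‖) := by rw [mul_pow]; ring
      have hlim : Filter.Tendsto (fun k : ℕ => (δ * c) ^ k * (‖W‖ * ‖x‖))
          Filter.atTop (nhds 0) := by
        have h := (tendsto_pow_atTop_nhds_zero_of_lt_one hr0 hr1).mul_const (‖W‖ * ‖x‖)
        simpa using h
      have hle : ‖F (W (V x))‖ ≤ 0 := ge_of_tendsto' hlim hbound
      exact norm_le_zero_iff.mp hle
    -- the subspace M
    set M : Submodule ℂ K :=
      { carrier := {y | ∀ W ∈ Ws, F (W y) = 0}
        add_mem' := by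
          intro a b ha hb W hW
          rw [map_add, map_add, ha W hW, hb W hW, add_zero]
        zero_mem' := by
          intro W hW
          rw [map_zero, map_zero]
        smul_mem' := by
          intro r a ha W hW
          rw [map_smul, map_smul, ha W hW, smul_zero] } with hMdef
    have hmemM : ∀ y : K, y ∈ M ↔ ∀ W ∈ Ws, F (W y) = 0 := fun y => Iff.rfl
    have hMclosed : IsClosed (M : Set K) := by
      have h : (M : Set K) = ⋂ (W : Ws), {y : K | F (W.1 y) = 0} := by
        ext y
        simp only [SetLike.mem_coe, hmemM, Set.mem_iInter, Set.mem_setOf_eq]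
        exact ⟨fun h W => h W.1 W.2, fun h W hW => h ⟨W, hW⟩⟩
      rw [h]
      exact isClosed_iInter fun W =>
        isClosed_eq (F.continuous.comp W.1.continuous) continuous_const
    have hinvS : ∀ y ∈ M, S y ∈ M := by
      intro y hy W hW
      have h := hy (W * S) (mul_mem hW hScl)
      simpa only [ContinuousLinearMap.mul_apply] using h
    have hNstar : ∀ y ∈ M, (star N) y ∈ M := by
      intro y hy W hW
      have h := hy (W * star N) (mul_mem hW hstarNcl)
      simpa only [ContinuousLinearMap.mul_apply] using h
    have hVM : ∀ x : H, V x ∈ M := fun x W hW => hkey W hW x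
    -- minimality applies
    have hMtop : M = ⊤ := by
      refine hmin2 M hMclosed hinvS hVM ?_
      letI : CompleteSpace M := hMclosed.completeSpace_coe
      set R : M →L[ℂ] M := ContinuousLinearMap.codRestrict (S.comp M.subtypeL) M
        (fun y => hinvS y y.2) with hR
      show IsStarNormal (R ^ n)
      have hRapp : ∀ y : M, ((R y : M) : K) = S (y : K) := fun y => rfl
      have hRpow : ∀ (k : ℕ) (y : M), (((R ^ k) y : M) : K) = (S ^ k) (y : K) := by
        intro k
        induction k with
        | zero => intro y; simp
        | succ k ih =>
          intro y
          have h1 : (R ^ (k+1)) y = R ((R ^ k) y) := by rw [pow_succ']; rfl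
          rw [h1, hRapp, ih, ← ContinuousLinearMap.mul_apply, ← pow_succ']
      set B : M →L[ℂ] M := ContinuousLinearMap.codRestrict ((star N).comp M.subtypeL) M
        (fun y => hNstar y y.2) with hB
      have hBapp : ∀ y : M, ((B y : M) : K) = (star N) (y : K) := fun y => rfl
      have hBadj : B = ContinuousLinearMap.adjoint (R ^ n) := by
        rw [ContinuousLinearMap.eq_adjoint_iff]
        intro u v
        rw [Submodule.coe_inner, Submodule.coe_inner, hBapp, hRpow n v,
          ContinuousLinearMap.star_eq_adjoint]
        exact ContinuousLinearMap.adjoint_inner_left (S ^ n) (v : K) (u : K)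
      constructor
      rw [Commute, SemiconjBy, ContinuousLinearMap.star_eq_adjoint, ← hBadj]
      ext y
      have hl : (((B * (R ^ n)) y : M) : K) = (star N) ((S ^ n) (y : K)) := by
        rw [ContinuousLinearMap.mul_apply, hBapp, hRpow]
      have hr : ((((R ^ n) * B) y : M) : K) = (S ^ n) ((star N) (y : K)) := by
        rw [ContinuousLinearMap.mul_apply, hRpow, hBapp]
      rw [hl, hr]
      have h := hNnormal.star_comm_self.eq
      have h2 := DFunLike.congr_fun h (y : K)
      simpa only [ContinuousLinearMap.mul_apply, hNdef] using h2
    -- conclusion : F = 0, contradicting the spectral mapping theorem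
    have hF0 : F = 0 := by
      ext y
      have hy : y ∈ M := hMtop ▸ Submodule.mem_top
      have h := hy 1 (one_mem Ws)
      simpa using h
    have hspec : (1 : ℂ) ∈ spectrum ℂ F := by
      rw [hF, cfc_map_spectrum (f := f) (a := N) hNnormal hfcont.continuousOn]
      exact ⟨0, h0, hf0⟩
    rw [hF0] at hspec
    have hcontra : ¬ IsUnit ((algebraMap ℂ (K →L[ℂ] K)) 1 - 0) := spectrum.mem_iff.mp hspec
    apply hcontra
    simpa using isUnit_one

end
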